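/- Let λ_M > 0, let j ≥ 2 be an integer, and let δ ≥ 0 satisfy j·δ ≤ (j−1)λ_M/2. Let e : [0,∞) → (0,∞) be differentiable with |e'(t)| ≤ δ·e(t) for all t ≥ 0. Then for all t ≥ 0, ∫₀^t e^{(j−1)λ_M s} e(s)^j ds ≤ (2/((j−1)λ_M)) e^{(j−1)λ_M t} e(t)^j. Consequently, if K, C > 0 and u : [0,∞) → [0,∞) satisfies u(t) ≤ C ∫₀^t e^{λ_M (t−s)} K (e^{λ_M s} e(s))^j ds for all t ≥ 0, then u(t) ≤ (2CK/((j−1)λ_M)) (e^{λ_M t} e(t))^j for all t ≥ 0. -/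

import Mathlib

open Real MeasureTheory

/-- Growth bound for the Duhamel integral against an almost-constant prefactor `e(t)`. -/
theorem duhamel_growth_bound (lamM : ℝ) (hlamM : 0 < lamM) (j : ℕ) (hj : 2 ≤ j)
    (δ : ℝ) (hδ : 0 ≤ δ) (hjδ : (j : ℝ) * δ ≤ ((j : ℝ) - 1) * lamM / 2)
    (e : ℝ → ℝ) (hepos : ∀ t : ℝ, 0 ≤ t → 0 < e t)
    (hediff : ∀ t : ℝ, 0 ≤ t → DifferentiableWithinAt ℝ e (Set.Ici 0) t)
    (hde : ∀ t : ℝ, 0 ≤ t → |derivWithin e (Set.Ici 0) t| ≤ δ * e t) :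
    (∀ t : ℝ, 0 ≤ t →
      ∫ s in (0 : ℝ)..t, Real.exp (((j : ℝ) - 1) * lamM * s) * (e s) ^ j ≤
        (2 / (((j : ℝ) - 1) * lamM)) * Real.exp (((j : ℝ) - 1) * lamM * t) * (e t) ^ j) ∧
    ∀ K C : ℝ, 0 < K → 0 < C →
      ∀ u : ℝ → ℝ, (∀ t : ℝ, 0 ≤ t → 0 ≤ u t) →
        (∀ t : ℝ, 0 ≤ t →
          u t ≤ C * ∫ s in (0 : ℝ)..t,
            Real.exp (lamM * (t - s)) * K * (Real.exp (lamM * s) * e s) ^ j) →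
        ∀ t : ℝ, 0 ≤ t →
          u t ≤ (2 * C * K / (((j : ℝ) - 1) * lamM)) * (Real.exp (lamM * t) * e t) ^ j := by
  have hj2 : (2:ℝ) ≤ (j:ℝ) := by exact_mod_cast hj
  set a : ℝ := ((j : ℝ) - 1) * lamM with ha
  have ha0 : 0 < a := by
    apply mul_pos (by linarith) hlamM
  have hjδ' : (j : ℝ) * δ ≤ a / 2 := hjδ
  clear_value a
  have hecont : ContinuousOn e (Set.Ici 0) := fun x hx => (hediff x hx).continuousWithinAt
  set g : ℝ → ℝ := fun s => Real.exp (a * s) * e s ^ j with hgdef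
  have part1 : ∀ t : ℝ, 0 ≤ t →
      ∫ s in (0:ℝ)..t, g s ≤ (2 / a) * Real.exp (a * t) * e t ^ j := by
    intro t ht
    set f' : ℝ → ℝ := fun s =>
      Real.exp (a * s) * (a * 1) * e s ^ j +
        Real.exp (a * s) * ((j : ℝ) * e s ^ (j - 1) * deriv e s) with hf'def
    have hgcont : ContinuousOn g (Set.Icc 0 t) := by
      apply ContinuousOn.mul
      · exact (Real.continuous_exp.comp (continuous_const.mul continuous_id)).continuousOn
      · exact (hecont.mono (fun x hx => hx.1)).pow j
    have hgint : IntervalIntegrable g volume 0 t := by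
      apply ContinuousOn.intervalIntegrable
      rwa [Set.uIcc_of_le ht]
    -- derivWithin = deriv on Ioi 0
    have hderiv_eq : ∀ s : ℝ, 0 < s → derivWithin e (Set.Ici 0) s = deriv e s := by
      intro s hs
      exact derivWithin_of_mem_nhds (Ici_mem_nhds hs)
    have hde' : ∀ s : ℝ, 0 < s → |deriv e s| ≤ δ * e s := by
      intro s hs
      rw [← hderiv_eq s hs]
      exact hde s hs.le
    -- HasDerivAt of g at interior points
    have hgderiv : ∀ x ∈ Set.Ioo (0:ℝ) t, HasDerivAt g (f' x) x := by
      intro x hx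
      have hex : HasDerivAt e (deriv e x) x :=
        ((hediff x hx.1.le).differentiableAt (Ici_mem_nhds hx.1)).hasDerivAt
      have hE : HasDerivAt (fun s => Real.exp (a * s)) (Real.exp (a * x) * (a * 1)) x :=
        ((hasDerivAt_id x).const_mul a).exp
      exact hE.mul (hex.pow j)
    have hgderiv' : ∀ x ∈ Set.Ioo (0:ℝ) t, HasDerivWithinAt g (f' x) (Set.Ioi x) x :=
      fun x hx => (hgderiv x hx).hasDerivWithinAt
    -- integrability of f'
    have hmeas : AEStronglyMeasurable f' (volume.restrict (Set.Ioc 0 t)) := by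
      have he_m : AEStronglyMeasurable e (volume.restrict (Set.Ioc 0 t)) :=
        (hecont.mono (fun x hx => hx.1.le)).aestronglyMeasurable measurableSet_Ioc
      have hd_m : AEStronglyMeasurable (deriv e) (volume.restrict (Set.Ioc 0 t)) :=
        (measurable_deriv e).aestronglyMeasurable.restrict
      have hexp : AEStronglyMeasurable (fun s => Real.exp (a * s))
          (volume.restrict (Set.Ioc 0 t)) :=
        (Real.continuous_exp.comp (continuous_const.mul continuous_id)).aestronglyMeasurable.restrict
      exact ((hexp.mul aestronglyMeasurable_const).mul (he_m.pow j)).add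
        (hexp.mul ((aestronglyMeasurable_const.mul (he_m.pow (j-1))).mul hd_m))
    have hbound_int : IntegrableOn (fun s => (a + (j:ℝ) * δ) * g s) (Set.Ioc 0 t) := by
      exact ((hgcont.integrableOn_Icc).mono_set Set.Ioc_subset_Icc_self).const_mul _
    have hf'int_Ioc : IntegrableOn f' (Set.Ioc 0 t) := by
      apply Integrable.mono' hbound_int hmeas
      filter_upwards [ae_restrict_mem measurableSet_Ioc] with s hs
      have hes : 0 < e s := hepos s hs.1.le
      have hds : |deriv e s| ≤ δ * e s := hde' s hs.1
      have hgs : 0 < g s := by positivity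
      have hpow : e s ^ (j - 1) * e s = e s ^ j := by
        rw [← pow_succ]
        congr 1
        omega
      rw [Real.norm_eq_abs]
      have h1 : |f' s| ≤ Real.exp (a*s) * (a*1) * e s ^ j +
          Real.exp (a*s) * ((j:ℝ) * e s ^ (j-1) * |deriv e s|) := by
        refine (abs_add_le _ _).trans ?_
        have e1 : |Real.exp (a*s) * (a*1) * e s ^ j| = Real.exp (a*s) * (a*1) * e s ^ j :=
          abs_of_nonneg (by positivity)
        have e2 : |Real.exp (a*s) * ((j:ℝ) * e s ^ (j-1) * deriv e s)| =
            Real.exp (a*s) * ((j:ℝ) * e s ^ (j-1) * |deriv e s|) := by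
          rw [abs_mul, abs_mul, abs_of_nonneg (Real.exp_pos _).le,
            abs_of_nonneg (by positivity : (0:ℝ) ≤ (j:ℝ) * e s ^ (j-1))]
        rw [e1, e2]
      refine h1.trans ?_
      have h2 : Real.exp (a*s) * ((j:ℝ) * e s ^ (j-1) * |deriv e s|) ≤
          Real.exp (a*s) * ((j:ℝ) * e s ^ (j-1) * (δ * e s)) :=
        mul_le_mul_of_nonneg_left
          (mul_le_mul_of_nonneg_left hds (by positivity)) (Real.exp_pos _).le
      calc Real.exp (a*s) * (a*1) * e s ^ j +
            Real.exp (a*s) * ((j:ℝ) * e s ^ (j-1) * |deriv e s|)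
          ≤ Real.exp (a*s) * (a*1) * e s ^ j +
            Real.exp (a*s) * ((j:ℝ) * e s ^ (j-1) * (δ * e s)) := by linarith [h2]
        _ = (a + (j:ℝ) * δ) * g s := by
            simp only [hgdef]
            rw [show (j:ℝ) * e s ^ (j-1) * (δ * e s) = (j:ℝ) * δ * (e s ^ (j-1) * e s) by ring,
              hpow]
            ring
    have hf'int : IntervalIntegrable f' volume 0 t := by
      rw [intervalIntegrable_iff_integrableOn_Ioc_of_le ht]
      exact hf'int_Ioc
    -- FTC
    have hFTC : ∫ s in (0:ℝ)..t, f' s = g t - g 0 :=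
      intervalIntegral.integral_eq_sub_of_hasDeriv_right_of_le ht hgcont hgderiv' hf'int
    -- pointwise comparison
    have hcmp : ∀ s ∈ Set.Ioc (0:ℝ) t, g s ≤ (2 / a) * f' s := by
      intro s hs
      have hes : 0 < e s := hepos s hs.1.le
      have hds : |deriv e s| ≤ δ * e s := hde' s hs.1
      have hpow : e s ^ (j - 1) * e s = e s ^ j := by
        rw [← pow_succ]; congr 1; omega
      have hlow : (a / 2) * g s ≤ f' s := by
        have hd_low : -(δ * e s) ≤ deriv e s := neg_le_of_abs_le hds
        have h3 : Real.exp (a*s) * ((j:ℝ) * e s ^ (j-1) * (-(δ * e s))) ≤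
            Real.exp (a*s) * ((j:ℝ) * e s ^ (j-1) * deriv e s) :=
          mul_le_mul_of_nonneg_left
            (mul_le_mul_of_nonneg_left hd_low (by positivity)) (Real.exp_pos _).le
        have h4 : Real.exp (a*s) * ((j:ℝ) * e s ^ (j-1) * (-(δ * e s))) =
            -((j:ℝ) * δ) * g s := by
          simp only [hgdef]
          rw [show (j:ℝ) * e s ^ (j-1) * (-(δ * e s)) = -((j:ℝ) * δ) * (e s ^ (j-1) * e s) by ring,
            hpow]
          ring
        have h5 : f' s ≥ a * g s - ((j:ℝ) * δ) * g s := by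
          simp only [hf'def]
          have : Real.exp (a*s) * (a*1) * e s ^ j = a * g s := by
            simp only [hgdef]; ring
          rw [this]
          nlinarith [h3, h4]
        have hgs : 0 ≤ g s := by positivity
        have e2 : (a/2) * g s ≤ (a - (j:ℝ)*δ) * g s := by
          apply mul_le_mul_of_nonneg_right _ hgs
          linarith [hjδ']
        calc (a/2) * g s ≤ (a - (j:ℝ)*δ) * g s := e2
          _ = a * g s - (j:ℝ) * δ * g s := by ring
          _ ≤ f' s := h5
      have h2a : 0 < 2 / a := by positivity
      calc g s = (2/a) * ((a/2) * g s) := by field_simp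
        _ ≤ (2/a) * f' s := by
            apply mul_le_mul_of_nonneg_left hlow h2a.le
    have hf'int2 : IntervalIntegrable (fun s => (2/a) * f' s) volume 0 t :=
      hf'int.const_mul _
    have hae : g ≤ᵐ[volume.restrict (Set.Icc 0 t)] fun s => (2/a) * f' s := by
      rw [← MeasureTheory.Measure.restrict_congr_set MeasureTheory.Ioc_ae_eq_Icc]
      exact (ae_restrict_iff' measurableSet_Ioc).2 (Filter.Eventually.of_forall hcmp)
    have hint : ∫ s in (0:ℝ)..t, g s ≤ ∫ s in (0:ℝ)..t, (2/a) * f' s :=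
      intervalIntegral.integral_mono_ae_restrict ht hgint hf'int2 hae
    have hg0 : 0 < g 0 := by
      have := hepos 0 le_rfl
      simp only [hgdef]
      positivity
    calc ∫ s in (0:ℝ)..t, g s ≤ ∫ s in (0:ℝ)..t, (2/a) * f' s := hint
      _ = (2/a) * (g t - g 0) := by rw [intervalIntegral.integral_const_mul, hFTC]
      _ ≤ (2/a) * g t := by
          apply mul_le_mul_of_nonneg_left _ (by positivity)
          linarith
      _ = (2 / a) * Real.exp (a * t) * e t ^ j := by simp only [hgdef]; ring
  refine ⟨part1, ?_⟩
  intro K C hK hC u hu hub t ht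
  have h1 := part1 t ht
  have hrw : (∫ s in (0:ℝ)..t,
      Real.exp (lamM * (t - s)) * K * (Real.exp (lamM * s) * e s) ^ j)
      = K * Real.exp (lamM * t) * ∫ s in (0:ℝ)..t, g s := by
    rw [← intervalIntegral.integral_const_mul]
    apply intervalIntegral.integral_congr
    intro s _
    simp only [hgdef]
    rw [mul_pow, ← Real.exp_nat_mul]
    have hkey : Real.exp (lamM * (t - s)) * Real.exp ((j:ℝ) * (lamM * s)) =
        Real.exp (lamM * t) * Real.exp (a * s) := by
      rw [← Real.exp_add, ← Real.exp_add]
      congr 1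
      rw [ha]; ring
    linear_combination (K * e s ^ j) * hkey
  have hub' := hub t ht
  rw [hrw] at hub'
  have hKe : 0 ≤ K * Real.exp (lamM * t) := by positivity
  have h2 : K * Real.exp (lamM * t) * ∫ s in (0:ℝ)..t, g s ≤
      K * Real.exp (lamM * t) * ((2 / a) * Real.exp (a * t) * e t ^ j) :=
    mul_le_mul_of_nonneg_left h1 hKe
  have h3 : u t ≤ C * (K * Real.exp (lamM * t) * ((2 / a) * Real.exp (a * t) * e t ^ j)) :=
    hub'.trans (mul_le_mul_of_nonneg_left h2 hC.le)
  refine h3.trans_eq ?_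
  rw [mul_pow, ← Real.exp_nat_mul,
    show (j:ℝ) * (lamM * t) = lamM * t + a * t by rw [ha]; ring, Real.exp_add]
  field_simp
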